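/- Let A be a symmetric positive Hilbert–Schmidt operator with simple nonzero eigenvalues λ₁ > λ₂ > ⋯, let D > 0 be an integer with λ_D > 0, and set δ_D = (λ_D − λ_{D+1})/2. Let B be a symmetric Hilbert–Schmidt operator with ‖B‖_F ≤ δ_D/2 such that A + B is positive. Then ‖P^D(A) − P^D(A+B)‖_F ≤ ‖B‖_F/δ_D, where P^D(M) is the orthogonal projector onto the span of the first D eigenvectors of M. -/
import Mathlib

open Matrix

noncomputable def frobNorm {p q : ℕ} (M : Matrix (Fin p) (Fin q) ℝ) : ℝ :=
  Real.sqrt (∑ i, ∑ j, (M i j)^2)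

namespace ZB

variable {p : ℕ}

lemma complete (w : Fin p → (Fin p → ℝ))
    (hwon : ∀ i j, w i ⬝ᵥ w j = if i = j then (1 : ℝ) else 0) (a b : Fin p) :
    ∑ j, w j a * w j b = if a = b then (1 : ℝ) else 0 := by
  classical
  set W : Matrix (Fin p) (Fin p) ℝ := Matrix.of (fun x j => w j x) with hWdef
  have h1 : Wᵀ * W = 1 := by
    ext i j
    have := hwon i j
    simpa [Matrix.mul_apply, Matrix.one_apply, dotProduct, hWdef] using this
  have h2 : W * Wᵀ = 1 := mul_eq_one_comm.mp h1
  have h3 := congrFun (congrFun h2 a) b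
  simpa [Matrix.mul_apply, Matrix.one_apply, hWdef] using h3

lemma parseval (w : Fin p → (Fin p → ℝ))
    (hc : ∀ a b, ∑ j, w j a * w j b = if a = b then (1 : ℝ) else 0)
    (v : Fin p → ℝ) :
    ∑ j, (v ⬝ᵥ w j)^2 = v ⬝ᵥ v := by
  have step : ∀ j : Fin p, (v ⬝ᵥ w j)^2 = ∑ a, ∑ b, (v a * v b) * (w j a * w j b) := by
    intro j
    rw [sq, dotProduct, Finset.sum_mul_sum]
    exact Finset.sum_congr rfl fun a _ => Finset.sum_congr rfl fun b _ => by ring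
  calc ∑ j, (v ⬝ᵥ w j)^2
      = ∑ j, ∑ a, ∑ b, (v a * v b) * (w j a * w j b) :=
        Finset.sum_congr rfl fun j _ => step j
    _ = ∑ a, ∑ b, (v a * v b) * (∑ j, w j a * w j b) := by
        rw [Finset.sum_comm]
        refine Finset.sum_congr rfl fun a _ => ?_
        rw [Finset.sum_comm]
        exact Finset.sum_congr rfl fun b _ => (Finset.mul_sum _ _ _).symm
    _ = v ⬝ᵥ v := by
        simp only [hc, mul_ite, mul_one, mul_zero]
        simp [dotProduct, Finset.sum_ite_eq, sq]

lemma sum_prod_eq (x y : Fin p → (Fin p → ℝ)) (s t : Finset (Fin p)) :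
    ∑ a, ∑ b, (∑ i ∈ s, x i a * x i b) * (∑ k ∈ t, y k a * y k b)
      = ∑ i ∈ s, ∑ k ∈ t, (x i ⬝ᵥ y k)^2 := by
  have step : ∀ a b : Fin p, (∑ i ∈ s, x i a * x i b) * (∑ k ∈ t, y k a * y k b)
      = ∑ i ∈ s, ∑ k ∈ t, (x i a * y k a) * (x i b * y k b) := by
    intro a b
    rw [Finset.sum_mul_sum]
    exact Finset.sum_congr rfl fun i _ => Finset.sum_congr rfl fun k _ => by ring
  calc ∑ a, ∑ b, (∑ i ∈ s, x i a * x i b) * (∑ k ∈ t, y k a * y k b)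
      = ∑ a, ∑ b, ∑ i ∈ s, ∑ k ∈ t, (x i a * y k a) * (x i b * y k b) :=
        Finset.sum_congr rfl fun a _ => Finset.sum_congr rfl fun b _ => step a b
    _ = ∑ a, ∑ i ∈ s, ∑ k ∈ t, ∑ b, (x i a * y k a) * (x i b * y k b) := by
        refine Finset.sum_congr rfl fun a _ => ?_
        rw [Finset.sum_comm]
        exact Finset.sum_congr rfl fun i _ => Finset.sum_comm
    _ = ∑ i ∈ s, ∑ k ∈ t, ∑ a, ∑ b, (x i a * y k a) * (x i b * y k b) := by
        rw [Finset.sum_comm]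
        exact Finset.sum_congr rfl fun i _ => Finset.sum_comm
    _ = ∑ i ∈ s, ∑ k ∈ t, (x i ⬝ᵥ y k)^2 := by
        refine Finset.sum_congr rfl fun i _ => Finset.sum_congr rfl fun k _ => ?_
        rw [sq, dotProduct, Finset.sum_mul_sum]

lemma keylemma (d g S B1 B2 F a b : ℝ) (hd : 0 < d) (hg : 0 < g)
    (hSnn : 0 ≤ S) (hB1 : 0 ≤ B1) (hB2 : 0 ≤ B2)
    (hab : a + b = 2*d + g)
    (h1 : 0 ≤ a → a^2 * S ≤ B1) (h2 : 0 ≤ b → b^2 * S ≤ B2)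
    (hF : B1 + B2 ≤ F) : 2 * d^2 * S ≤ F := by
  rcases le_or_gt 0 a with ha | ha
  · rcases le_or_gt 0 b with hb | hb
    · have e1 := h1 ha
      have e2 := h2 hb
      have h4 : 2 * d^2 ≤ a^2 + b^2 := by nlinarith [sq_nonneg (a - b)]
      have h5 : 2 * d^2 * S ≤ (a^2 + b^2) * S := mul_le_mul_of_nonneg_right h4 hSnn
      nlinarith
    · have ha2 : 2 * d ≤ a := by linarith
      have e1 := h1 ha
      have h4 : 2 * d^2 ≤ a^2 := by nlinarith
      have h5 : 2 * d^2 * S ≤ a^2 * S := mul_le_mul_of_nonneg_right h4 hSnn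
      linarith
  · have hb2 : 2 * d ≤ b := by linarith
    have e2 := h2 (by linarith)
    have h4 : 2 * d^2 ≤ b^2 := by nlinarith
    have h5 : 2 * d^2 * S ≤ b^2 * S := mul_le_mul_of_nonneg_right h4 hSnn
    linarith

lemma eig_gap (A B : Matrix (Fin p) (Fin p) ℝ) (hA : A.IsHermitian)
    (μ ν : Fin p → ℝ) (u w : Fin p → (Fin p → ℝ))
    (hueig : ∀ i, A.mulVec (u i) = μ i • u i)
    (hweig : ∀ i, (A + B).mulVec (w i) = ν i • w i) (i j : Fin p) :
    u i ⬝ᵥ B.mulVec (w j) = (ν j - μ i) * (u i ⬝ᵥ w j) := by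
  have hAt : Aᵀ = A := by
    have := hA; rwa [Matrix.IsHermitian, conjTranspose_eq_transpose_of_trivial] at this
  have e2 : u i ⬝ᵥ A.mulVec (w j) = μ i * (u i ⬝ᵥ w j) := by
    rw [dotProduct_mulVec, ← Matrix.mulVec_transpose, hAt, hueig, smul_dotProduct]
    rfl
  have e1 : u i ⬝ᵥ (A + B).mulVec (w j) = ν j * (u i ⬝ᵥ w j) := by
    rw [hweig, dotProduct_smul]; rfl
  have e3 : u i ⬝ᵥ (A + B).mulVec (w j) = u i ⬝ᵥ A.mulVec (w j) + u i ⬝ᵥ B.mulVec (w j) := by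
    rw [Matrix.add_mulVec, dotProduct_add]
  rw [e2, e1] at e3
  linarith

end ZB

theorem stmt8 {p : ℕ} (D : ℕ) (hD1 : 1 ≤ D) (hDp : D < p)
    (A B : Matrix (Fin p) (Fin p) ℝ)
    (hA : A.IsHermitian) (hApos : A.PosSemidef) (hB : B.IsHermitian)
    (μ ν : Fin p → ℝ) (u w : Fin p → (Fin p → ℝ))
    (hμdec : StrictAnti μ) (hνdec : StrictAnti ν)
    (huon : ∀ i j, u i ⬝ᵥ u j = if i = j then (1 : ℝ) else 0)
    (hwon : ∀ i j, w i ⬝ᵥ w j = if i = j then (1 : ℝ) else 0)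
    (hueig : ∀ i, A.mulVec (u i) = μ i • u i)
    (hweig : ∀ i, (A + B).mulVec (w i) = ν i • w i)
    (hμpos : ∀ i, μ i ≠ 0)
    (hlamD : 0 < μ ⟨D - 1, by omega⟩)
    (hBsmall : frobNorm B ≤ (μ ⟨D - 1, by omega⟩ - μ ⟨D, hDp⟩) / 2 / 2)
    (hABpos : (A + B).PosSemidef) :
    frobNorm
        ((∑ i ∈ Finset.univ.filter (fun i : Fin p => (i : ℕ) < D),
            vecMulVec (u i) (u i)) -
         (∑ i ∈ Finset.univ.filter (fun i : Fin p => (i : ℕ) < D),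
            vecMulVec (w i) (w i))) ≤
      frobNorm B / ((μ ⟨D - 1, by omega⟩ - μ ⟨D, hDp⟩) / 2) := by
  classical
  have hd1p : D - 1 < p := by omega
  set T : Finset (Fin p) := Finset.univ.filter (fun i : Fin p => (i : ℕ) < D) with hTdef
  set T' : Finset (Fin p) := Finset.univ.filter (fun i : Fin p => ¬ (i : ℕ) < D) with hT'def
  have hucomp := ZB.complete u huon
  have hwcomp := ZB.complete w hwon
  have hF1 := ZB.eig_gap A B hA μ ν u w hueig hweig
  -- Parseval rows and columns
  have hrow : ∀ i, ∑ j, (u i ⬝ᵥ w j)^2 = 1 := by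
    intro i
    have h := ZB.parseval w hwcomp (u i)
    rwa [huon i i, if_pos rfl] at h
  have hcol : ∀ j, ∑ i, (u i ⬝ᵥ w j)^2 = 1 := by
    intro j
    have h := ZB.parseval u hucomp (w j)
    rw [hwon j j, if_pos rfl] at h
    rw [← h]
    exact Finset.sum_congr rfl fun i _ => by rw [dotProduct_comm]
  -- Frobenius norm of B through the two bases
  have hB2 : ∑ i, ∑ j, (u i ⬝ᵥ B.mulVec (w j))^2 = ∑ a, ∑ b, (B a b)^2 := by
    have e3 : ∀ b, ∑ i, (∑ a, B a b * u i a)^2 = ∑ a, (B a b)^2 := by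
      intro b
      have h := ZB.parseval u hucomp (fun a => B a b)
      simpa [dotProduct, sq] using h
    calc ∑ i, ∑ j, (u i ⬝ᵥ B.mulVec (w j))^2
        = ∑ i, ∑ b, (∑ a, B a b * u i a)^2 := by
          refine Finset.sum_congr rfl fun i _ => ?_
          calc ∑ j, (u i ⬝ᵥ B.mulVec (w j))^2
              = ∑ j, ((u i ᵥ* B) ⬝ᵥ w j)^2 := by
                exact Finset.sum_congr rfl fun j _ => by rw [dotProduct_mulVec]
            _ = (u i ᵥ* B) ⬝ᵥ (u i ᵥ* B) := ZB.parseval w hwcomp _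
            _ = ∑ b, (∑ a, B a b * u i a)^2 := by
                rw [dotProduct]
                refine Finset.sum_congr rfl fun b _ => ?_
                rw [sq]
                congr 1 <;>
                  · simp [Matrix.vecMul, dotProduct]
                    exact Finset.sum_congr rfl fun a _ => by ring
      _ = ∑ b, ∑ i, (∑ a, B a b * u i a)^2 := Finset.sum_comm
      _ = ∑ b, ∑ a, (B a b)^2 := Finset.sum_congr rfl fun b _ => e3 b
      _ = ∑ a, ∑ b, (B a b)^2 := Finset.sum_comm
  -- cardinality of T
  have hcardN : T.card = D := by
    have : T = Finset.Iio (⟨D, hDp⟩ : Fin p) := by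
      ext i; simp [hTdef, Fin.lt_def]
    rw [this, Fin.card_Iio]
  have hcardR : ((T.card : ℕ) : ℝ) = (D : ℝ) := by rw [hcardN]
  -- diagonal double sums
  have hdiag : ∀ (x : Fin p → Fin p → ℝ),
      (∀ i j, x i ⬝ᵥ x j = if i = j then (1:ℝ) else 0) →
      ∑ i ∈ T, ∑ k ∈ T, (x i ⬝ᵥ x k)^2 = (D : ℝ) := by
    intro x hx
    have h1 : ∀ i ∈ T, ∑ k ∈ T, (x i ⬝ᵥ x k)^2 = 1 := by
      intro i hi
      rw [Finset.sum_eq_single i]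
      · rw [hx i i, if_pos rfl]; norm_num
      · intro k _ hki
        rw [hx i k, if_neg (fun h => hki h.symm)]; norm_num
      · intro h; exact absurd hi h
    rw [Finset.sum_congr rfl h1, Finset.sum_const, nsmul_eq_mul, mul_one, hcardR]
  -- Frobenius norm of the projector difference
  set S : ℝ := ∑ i ∈ T, ∑ j ∈ T', (u i ⬝ᵥ w j)^2 with hSdef
  have hSnn : 0 ≤ S := Finset.sum_nonneg fun i _ => Finset.sum_nonneg fun j _ => sq_nonneg _
  have entry : ∀ a b : Fin p,
      (((∑ i ∈ T, vecMulVec (u i) (u i)) - ∑ i ∈ T, vecMulVec (w i) (w i)) a b)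
        = (∑ i ∈ T, u i a * u i b) - (∑ i ∈ T, w i a * w i b) := by
    intro a b
    simp [Matrix.sub_apply, Matrix.sum_apply, Matrix.vecMulVec_apply]
  have hfrobPQ : ∑ a, ∑ b,
      (((∑ i ∈ T, vecMulVec (u i) (u i)) - ∑ i ∈ T, vecMulVec (w i) (w i)) a b)^2
      = 2*(D:ℝ) - 2*(∑ i ∈ T, ∑ k ∈ T, (u i ⬝ᵥ w k)^2) := by
    have expand : ∀ a b : Fin p,
        (((∑ i ∈ T, vecMulVec (u i) (u i)) - ∑ i ∈ T, vecMulVec (w i) (w i)) a b)^2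
        = (∑ i ∈ T, u i a * u i b) * (∑ k ∈ T, u k a * u k b)
          - 2*((∑ i ∈ T, u i a * u i b) * (∑ k ∈ T, w k a * w k b))
          + (∑ i ∈ T, w i a * w i b) * (∑ k ∈ T, w k a * w k b) := by
      intro a b; rw [entry a b]; ring
    calc ∑ a, ∑ b, (((∑ i ∈ T, vecMulVec (u i) (u i)) - ∑ i ∈ T, vecMulVec (w i) (w i)) a b)^2
        = ∑ a, ∑ b, ((∑ i ∈ T, u i a * u i b) * (∑ k ∈ T, u k a * u k b)
          - 2*((∑ i ∈ T, u i a * u i b) * (∑ k ∈ T, w k a * w k b))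
          + (∑ i ∈ T, w i a * w i b) * (∑ k ∈ T, w k a * w k b)) :=
          Finset.sum_congr rfl fun a _ => Finset.sum_congr rfl fun b _ => expand a b
      _ = (∑ a, ∑ b, (∑ i ∈ T, u i a * u i b) * (∑ k ∈ T, u k a * u k b))
          - 2*(∑ a, ∑ b, (∑ i ∈ T, u i a * u i b) * (∑ k ∈ T, w k a * w k b))
          + (∑ a, ∑ b, (∑ i ∈ T, w i a * w i b) * (∑ k ∈ T, w k a * w k b)) := by
          simp only [Finset.sum_add_distrib, Finset.sum_sub_distrib, ← Finset.mul_sum]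
      _ = (D:ℝ) - 2*(∑ i ∈ T, ∑ k ∈ T, (u i ⬝ᵥ w k)^2) + (D:ℝ) := by
          rw [ZB.sum_prod_eq u u T T, ZB.sum_prod_eq u w T T, ZB.sum_prod_eq w w T T,
            hdiag u huon, hdiag w hwon]
      _ = 2*(D:ℝ) - 2*(∑ i ∈ T, ∑ k ∈ T, (u i ⬝ᵥ w k)^2) := by ring
  -- splitting sums
  have hsplit : ∀ f : Fin p → ℝ, ∑ j ∈ T, f j + ∑ j ∈ T', f j = ∑ j, f j := by
    intro f
    exact Finset.sum_filter_add_sum_filter_not _ _ f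
  have hTT : ∑ i ∈ T, ∑ k ∈ T, (u i ⬝ᵥ w k)^2 = (D:ℝ) - S := by
    have h1 : ∑ i ∈ T, ∑ k ∈ T, (u i ⬝ᵥ w k)^2 + S = (D:ℝ) := by
      rw [hSdef, ← Finset.sum_add_distrib]
      have : ∀ i ∈ T, (∑ k ∈ T, (u i ⬝ᵥ w k)^2 + ∑ j ∈ T', (u i ⬝ᵥ w j)^2) = 1 := by
        intro i _
        rw [hsplit]
        exact hrow i
      rw [Finset.sum_congr rfl this, Finset.sum_const, nsmul_eq_mul, mul_one, hcardR]
    linarith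
  have hS' : ∑ i ∈ T', ∑ j ∈ T, (u i ⬝ᵥ w j)^2 = S := by
    have h1 : ∑ j ∈ T, ∑ i ∈ T, (u i ⬝ᵥ w j)^2 + ∑ j ∈ T, ∑ i ∈ T', (u i ⬝ᵥ w j)^2 = (D:ℝ) := by
      rw [← Finset.sum_add_distrib]
      have : ∀ j ∈ T, (∑ i ∈ T, (u i ⬝ᵥ w j)^2 + ∑ i ∈ T', (u i ⬝ᵥ w j)^2) = 1 := by
        intro j _
        rw [hsplit]
        exact hcol j
      rw [Finset.sum_congr rfl this, Finset.sum_const, nsmul_eq_mul, mul_one, hcardR]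
    have h2 : ∑ j ∈ T, ∑ i ∈ T, (u i ⬝ᵥ w j)^2 = (D:ℝ) - S := by
      rw [Finset.sum_comm]; exact hTT
    have h3 : ∑ j ∈ T, ∑ i ∈ T', (u i ⬝ᵥ w j)^2 = S := by linarith
    rw [Finset.sum_comm]; exact h3
  -- membership bounds
  have hμT : ∀ i ∈ T, μ (⟨D - 1, hd1p⟩ : Fin p) ≤ μ i := by
    intro i hi
    have hi' : (i : ℕ) < D := by
      have := Finset.mem_filter.mp hi
      exact this.2
    exact hμdec.antitone (show i ≤ ⟨D - 1, hd1p⟩ from by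
      rw [Fin.le_def]; show (i : ℕ) ≤ D - 1; omega)
  have hμT' : ∀ i ∈ T', μ i ≤ μ (⟨D, hDp⟩ : Fin p) := by
    intro i hi
    have hi' : ¬ (i : ℕ) < D := (Finset.mem_filter.mp hi).2
    exact hμdec.antitone (show (⟨D, hDp⟩ : Fin p) ≤ i from by
      rw [Fin.le_def]; show D ≤ (i : ℕ); omega)
  have hνT : ∀ j ∈ T, ν (⟨D - 1, hd1p⟩ : Fin p) ≤ ν j := by
    intro j hj
    have hj' : (j : ℕ) < D := (Finset.mem_filter.mp hj).2
    exact hνdec.antitone (show j ≤ ⟨D - 1, hd1p⟩ from by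
      rw [Fin.le_def]; show (j : ℕ) ≤ D - 1; omega)
  have hνT' : ∀ j ∈ T', ν j ≤ ν (⟨D, hDp⟩ : Fin p) := by
    intro j hj
    have hj' : ¬ (j : ℕ) < D := (Finset.mem_filter.mp hj).2
    exact hνdec.antitone (show (⟨D, hDp⟩ : Fin p) ≤ j from by
      rw [Fin.le_def]; show D ≤ (j : ℕ); omega)
  have hd1dD : (⟨D - 1, hd1p⟩ : Fin p) < (⟨D, hDp⟩ : Fin p) := by
    rw [Fin.lt_def]; show D - 1 < D; omega
  have hμgap : μ (⟨D, hDp⟩ : Fin p) < μ (⟨D - 1, hd1p⟩ : Fin p) := hμdec hd1dD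
  have hνgap : ν (⟨D, hDp⟩ : Fin p) < ν (⟨D - 1, hd1p⟩ : Fin p) := hνdec hd1dD
  set δ : ℝ := (μ (⟨D - 1, hd1p⟩ : Fin p) - μ (⟨D, hDp⟩ : Fin p)) / 2 with hδdef
  have hδpos : 0 < δ := by rw [hδdef]; linarith
  -- block sums
  set B1 : ℝ := ∑ i ∈ T, ∑ j ∈ T', (u i ⬝ᵥ B.mulVec (w j))^2 with hB1def
  set B2 : ℝ := ∑ i ∈ T', ∑ j ∈ T, (u i ⬝ᵥ B.mulVec (w j))^2 with hB2def
  have hB1nn : 0 ≤ B1 := Finset.sum_nonneg fun i _ => Finset.sum_nonneg fun j _ => sq_nonneg _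
  have hB2nn : 0 ≤ B2 := Finset.sum_nonneg fun i _ => Finset.sum_nonneg fun j _ => sq_nonneg _
  have hblocks_le : B1 + B2 ≤ ∑ a, ∑ b, (B a b)^2 := by
    rw [← hB2]
    have h1 : B1 ≤ ∑ i ∈ T, ∑ j, (u i ⬝ᵥ B.mulVec (w j))^2 := by
      rw [hB1def]
      exact Finset.sum_le_sum fun i _ =>
        Finset.sum_le_sum_of_subset_of_nonneg (Finset.subset_univ _)
          (fun j _ _ => sq_nonneg _)
    have h2 : B2 ≤ ∑ i ∈ T', ∑ j, (u i ⬝ᵥ B.mulVec (w j))^2 := by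
      rw [hB2def]
      exact Finset.sum_le_sum fun i _ =>
        Finset.sum_le_sum_of_subset_of_nonneg (Finset.subset_univ _)
          (fun j _ _ => sq_nonneg _)
    have h3 := hsplit (fun i => ∑ j, (u i ⬝ᵥ B.mulVec (w j))^2)
    linarith
  -- lower bounds for blocks
  set a : ℝ := μ (⟨D - 1, hd1p⟩ : Fin p) - ν (⟨D, hDp⟩ : Fin p) with hadef
  set b : ℝ := ν (⟨D - 1, hd1p⟩ : Fin p) - μ (⟨D, hDp⟩ : Fin p) with hbdef
  have hblock1 : 0 ≤ a → a^2 * S ≤ B1 := by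
    intro ha
    rw [hSdef, hB1def, Finset.mul_sum]
    refine Finset.sum_le_sum fun i hi => ?_
    rw [Finset.mul_sum]
    refine Finset.sum_le_sum fun j hj => ?_
    rw [hF1 i j, mul_pow]
    have h1 := hμT i hi
    have h2 := hνT' j hj
    have : a^2 ≤ (ν j - μ i)^2 := by nlinarith
    exact mul_le_mul_of_nonneg_right this (sq_nonneg _)
  have hblock2 : 0 ≤ b → b^2 * S ≤ B2 := by
    intro hb
    rw [← hS', hB2def, Finset.mul_sum]
    refine Finset.sum_le_sum fun i hi => ?_
    rw [Finset.mul_sum]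
    refine Finset.sum_le_sum fun j hj => ?_
    rw [hF1 i j, mul_pow]
    have h1 := hμT' i hi
    have h2 := hνT j hj
    have : b^2 ≤ (ν j - μ i)^2 := by nlinarith
    exact mul_le_mul_of_nonneg_right this (sq_nonneg _)
  -- key inequality
  have key : 2 * δ^2 * S ≤ ∑ x, ∑ y, (B x y)^2 := by
    refine ZB.keylemma δ (ν (⟨D - 1, hd1p⟩ : Fin p) - ν (⟨D, hDp⟩ : Fin p)) S B1 B2
      _ a b hδpos (by linarith) hSnn hB1nn hB2nn ?_ hblock1 hblock2 hblocks_le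
    rw [hadef, hbdef, hδdef]; ring
  -- conclusion
  have hBfs_nn : 0 ≤ ∑ a, ∑ b, (B a b)^2 :=
    Finset.sum_nonneg fun i _ => Finset.sum_nonneg fun j _ => sq_nonneg _
  have main : frobNorm
      ((∑ i ∈ T, vecMulVec (u i) (u i)) - (∑ i ∈ T, vecMulVec (w i) (w i))) ≤
      frobNorm B / δ := by
    have hrhs : frobNorm B / δ = Real.sqrt ((∑ a, ∑ b, (B a b)^2) / δ^2) := by
      rw [frobNorm, Real.sqrt_div hBfs_nn, Real.sqrt_sq hδpos.le]
    rw [hrhs, frobNorm]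
    apply Real.sqrt_le_sqrt
    rw [hfrobPQ, hTT]
    have h7 : 2*(D:ℝ) - 2*((D:ℝ) - S) = 2*S := by ring
    rw [h7, le_div_iff₀ (by positivity : (0:ℝ) < δ^2)]
    calc 2*S*δ^2 = 2*δ^2*S := by ring
      _ ≤ _ := key
  exact main
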